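/- Let G be a partially directed graph on a finite vertex set V that is strictly acyclic and satisfies: whenever I→J is a directed edge and J—K is an undirected edge of G, the vertices I and K are adjacent. Let X and Y be disjoint vertex subsets such that G has no proper semi-directed path from X to Y that starts with an undirected edge. Then no chain component of G intersects both X and An_{G_{V∖X}}(Y), where G_{V∖X} is the induced subgraph of G on V∖X. -/

import Mathlib

open scoped Classical

/-- A partially directed graph on vertex type `V`: directed edges `dir i j` (i→j) and
undirected edges `undir i j` (i—j), with at most one edge between any two vertices. -/
structure PDG (V : Type) where
  dir : V → V → Prop
  undir : V → V → Prop
  undir_symm : ∀ i j, undir i j → undir j i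
  undir_irrefl : ∀ i, ¬ undir i i
  dir_irrefl : ∀ i, ¬ dir i i
  not_dir_dir : ∀ i j, dir i j → ¬ dir j i
  not_dir_undir : ∀ i j, dir i j → ¬ undir i j

namespace PDG

variable {V : Type}

/-- Adjacency: joined by some edge. -/
def Adj (G : PDG V) (i j : V) : Prop := G.dir i j ∨ G.dir j i ∨ G.undir i j

/-- A semi-directed step from `i` to `j`: an undirected edge or a directed edge `i→j`. -/
def SStep (G : PDG V) (i j : V) : Prop := G.dir i j ∨ G.undir i j

/-- Existence of a semi-directed cycle: `f 0, …, f m` with `f 0 = f m`, `m ≥ 2`,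
each consecutive pair a semi-directed step, at least one step directed. -/
def HasSemiDirectedCycle (G : PDG V) : Prop :=
  ∃ (m : ℕ) (f : ℕ → V), 2 ≤ m ∧ f 0 = f m ∧
    (∀ i < m, G.SStep (f i) (f (i + 1))) ∧ (∃ i < m, G.dir (f i) (f (i + 1)))

/-- Strictly acyclic: no semi-directed cycle. -/
def StrictlyAcyclic (G : PDG V) : Prop := ¬ G.HasSemiDirectedCycle

/-- Joined by a path of undirected edges (possibly trivial). -/
def sameChain (G : PDG V) (i j : V) : Prop := Relation.ReflTransGen G.undir i j

/-- The chain component of a vertex. -/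
def chainComp (G : PDG V) (i : V) : Set V := {j | G.sameChain i j}

/-- Parents of a vertex set. -/
def Pa (G : PDG V) (D : Set V) : Set V := {i | ∃ d ∈ D, G.dir i d}

/-- Ancestors of a vertex set (directed path, possibly of length 0). -/
def An (G : PDG V) (D : Set V) : Set V := {i | ∃ d ∈ D, Relation.ReflTransGen G.dir i d}

/-- A DAG: only directed edges, and no directed cycles. -/
def IsDAG (G : PDG V) : Prop :=
  (∀ i j, ¬ G.undir i j) ∧ ∀ i, ¬ Relation.TransGen G.dir i i

/-- Unshielded collider `(i, k, j)`: `i→k ← j` with `i`, `j` distinct and non-adjacent. -/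
def UC (G : PDG V) (i k j : V) : Prop :=
  i ≠ j ∧ G.dir i k ∧ G.dir j k ∧ ¬ G.Adj i j

/-- `D ∈ [G]`: `D` is a DAG with the same skeleton as `G`, containing every directed edge
of `G`, all of whose unshielded colliders are unshielded colliders of `G`. -/
def InClass (D G : PDG V) : Prop :=
  D.IsDAG ∧ (∀ i j, D.Adj i j ↔ G.Adj i j) ∧ (∀ i j, G.dir i j → D.dir i j) ∧
    (∀ i k j, D.UC i k j → G.UC i k j)

/-- `C` is a nonempty set, connected by undirected edges within `C`, receiving a directed
edge from `I` and one from `J`. -/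
def ComplexCand (G : PDG V) (I : V) (C : Set V) (J : V) : Prop :=
  C.Nonempty ∧
  (∀ a ∈ C, ∀ b ∈ C,
    Relation.ReflTransGen (fun x y => G.undir x y ∧ x ∈ C ∧ y ∈ C) a b) ∧
  (∃ c ∈ C, G.dir I c) ∧ (∃ c ∈ C, G.dir J c)

/-- Minimal complex `(I, C, J)` of `G`. -/
def MinimalComplex (G : PDG V) (I : V) (C : Set V) (J : V) : Prop :=
  I ≠ J ∧ ¬ G.Adj I J ∧ (∀ a ∈ C, ∀ b ∈ C, G.sameChain a b) ∧
  G.ComplexCand I C J ∧ ∀ C' ⊂ C, ¬ G.ComplexCand I C' J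

/-- Remove all directed edges pointing into `S`. -/
def removeInto (G : PDG V) (S : Set V) : PDG V where
  dir i j := G.dir i j ∧ j ∉ S
  undir := G.undir
  undir_symm := G.undir_symm
  undir_irrefl := G.undir_irrefl
  dir_irrefl i h := G.dir_irrefl i h.1
  not_dir_dir i j h h' := G.not_dir_dir i j h.1 h'.1
  not_dir_undir i j h h' := G.not_dir_undir i j h.1 h'

/-- Induced subgraph on the vertex set `D` (kept on the same vertex type; edges
outside `D` are discarded). -/
def induce (G : PDG V) (D : Set V) : PDG V where
  dir i j := G.dir i j ∧ i ∈ D ∧ j ∈ D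
  undir i j := G.undir i j ∧ i ∈ D ∧ j ∈ D
  undir_symm i j h := ⟨G.undir_symm i j h.1, h.2.2, h.2.1⟩
  undir_irrefl i h := G.undir_irrefl i h.1
  dir_irrefl i h := G.dir_irrefl i h.1
  not_dir_dir i j h h' := G.not_dir_dir i j h.1 h'.1
  not_dir_undir i j h h' := G.not_dir_undir i j h.1 h'.1

/-- `G(↛X)`: `G` with every directed edge into `X ∩ An_G(Y)` removed. -/
def noInto (G : PDG V) (X Y : Set V) : PDG V := G.removeInto (X ∩ G.An Y)

/-- `RM(G; X, Y)`: the induced subgraph of `G(↛X)` on `An_{G(↛X)}(Y)`. -/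
def RM (G : PDG V) (X Y : Set V) : PDG V :=
  (G.noInto X Y).induce ((G.noInto X Y).An Y)

/-- There is a proper semi-directed path from `X` to `Y` starting with an undirected
edge: distinct vertices `f 0 ∈ X, …, f m ∈ Y`, only `f 0` in `X`, each consecutive pair a
semi-directed step, the first edge undirected. -/
def HasProperUndirStartPath (G : PDG V) (X Y : Set V) : Prop :=
  ∃ (m : ℕ) (f : ℕ → V), 1 ≤ m ∧
    (∀ i ≤ m, ∀ j ≤ m, f i = f j → i = j) ∧
    f 0 ∈ X ∧ f m ∈ Y ∧ (∀ i < m, G.SStep (f i) (f (i + 1))) ∧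
    (∀ i, 1 ≤ i → i ≤ m → f i ∉ X) ∧ G.undir (f 0) (f 1)

/-- Membership in the chain decomposition `CD_G(D)`: the nonempty intersections of `D`
with chain components of `G`. -/
def CDmem (G : PDG V) (D S : Set V) : Prop :=
  S.Nonempty ∧ ∃ i, S = D ∩ G.chainComp i

end PDG

noncomputable section Prob

open PDG

variable {V : Type} [Fintype V] [DecidableEq V] {𝒳 : V → Type} [∀ i, Fintype (𝒳 i)]
  [∀ i, Nonempty (𝒳 i)]

/-- Marginal `p_S(v_S)`: sum of `p` over configurations agreeing with `v` on `S`. -/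
def marginal (p : (∀ i, 𝒳 i) → ℝ) (S : Set V) (v : ∀ i, 𝒳 i) : ℝ :=
  ∑ w : ∀ i, 𝒳 i, if ∀ i ∈ S, w i = v i then p w else 0

/-- Conditional `p(v_A | v_S) = p_{A∪S}(v_{A∪S}) / p_S(v_S)`. -/
def condP (p : (∀ i, 𝒳 i) → ℝ) (A S : Set V) (v : ∀ i, 𝒳 i) : ℝ :=
  marginal p (A ∪ S) v / marginal p S v

/-- A strictly positive pmf. -/
def IsPositivePMF (p : (∀ i, 𝒳 i) → ℝ) : Prop :=
  (∀ v, 0 < p v) ∧ ∑ v : ∀ i, 𝒳 i, p v = 1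

/-- `p` factorizes according to the DAG `D`. -/
def FactorizesDAG (p : (∀ i, 𝒳 i) → ℝ) (D : PDG V) : Prop :=
  ∀ v, p v = ∏ i : V, condP p {i} (D.Pa {i}) v

/-- The (finitely many) chain components of `G`. -/
def chainComponents (G : PDG V) : Finset (Set V) :=
  Finset.univ.image (fun i => G.chainComp i)

/-- The outer chain-graph factorization `∏_τ p(v_τ | v_{Pa_G(τ)})` over chain
components `τ` of `G`. -/
def chainProd (G : PDG V) (p : (∀ i, 𝒳 i) → ℝ) (v : ∀ i, 𝒳 i) : ℝ :=
  ∏ τ ∈ chainComponents G, condP p τ (G.Pa τ) v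

/-- The product `∏_j p(v_{D_j} | v_{Pa_G(D_j)})` over the chain decomposition
`CD_G(D) = {D_1,…,D_k}` (empty intersections contribute a factor `1`). -/
def cdProd (G : PDG V) (p : (∀ i, 𝒳 i) → ℝ) (D : Set V) (v : ∀ i, 𝒳 i) : ℝ :=
  ∏ τ ∈ chainComponents G, condP p (D ∩ τ) (G.Pa (D ∩ τ)) v

/-- The identification formula (g-formula) of Perković's theorem:
`Σ_b ∏_j p(b_j | pa_G(B_j))` where `{B_1,…,B_k} = CD_G(An_{G_{V∖X}}(Y))`,
the sum running over configurations of `B = An_{G_{V∖X}}(Y) ∖ Y`, all other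
coordinates (in particular the intervened values on `X` and the values on `Y`)
being fixed by `v`. -/
def gFormula (G : PDG V) (p : (∀ i, 𝒳 i) → ℝ) (X Y : Set V) (v : ∀ i, 𝒳 i) : ℝ :=
  ∑ w : ∀ i, 𝒳 i,
    if ∀ i, i ∉ (G.induce Xᶜ).An Y \ Y → w i = v i then
      cdProd G p ((G.induce Xᶜ).An Y) w
    else 0

/-- The re-weighting formula `Σ_{v'} p(v) / ∏_j p(x_j | pa_G(X_j))`, where
`{X_1,…,X_m} = CD_G(X ∩ An_G(Y))` and the sum runs over configurations of
`V ∖ (X ∪ Y)`, the coordinates on `X ∪ Y` being fixed by `v`. -/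
def rwFormula (G : PDG V) (p : (∀ i, 𝒳 i) → ℝ) (X Y : Set V) (v : ∀ i, 𝒳 i) : ℝ :=
  ∑ w : ∀ i, 𝒳 i,
    if ∀ i ∈ X ∪ Y, w i = v i then p w / cdProd G p (X ∩ G.An Y) w else 0

/-- The `Y`-marginal of the truncated factorization of `p` with respect to the DAG `D`:
`Σ_{v_{V∖(X∪Y)}} ∏_{i ∈ V∖X} p(v_i | v_{Pa_D(i)})`, the coordinates on `X ∪ Y` being
fixed by `v`. -/
def truncMarg (D : PDG V) (p : (∀ i, 𝒳 i) → ℝ) (X Y : Set V) (v : ∀ i, 𝒳 i) : ℝ :=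
  ∑ w : ∀ i, 𝒳 i,
    if ∀ i ∈ X ∪ Y, w i = v i then
      ∏ i ∈ Finset.univ.filter (fun i => i ∉ X), condP p {i} (D.Pa {i}) w
    else 0

end Prob

section Aux

variable {V : Type} (G : PDG V) (X : Set V)

/-- A (possibly non-simple) semi-directed walk from `X` to `v`, starting with an
undirected edge, whose non-initial vertices avoid `X`. -/
def WalkTo (v : V) : Prop :=
  ∃ (m : ℕ) (f : ℕ → V), 1 ≤ m ∧ f 0 ∈ X ∧ f m = v ∧
    (∀ i < m, G.SStep (f i) (f (i + 1))) ∧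
    (∀ i, 1 ≤ i → i ≤ m → f i ∉ X) ∧ G.undir (f 0) (f 1)

lemma WalkTo.step {v w : V} (h : WalkTo G X v) (hs : G.SStep v w) (hw : w ∉ X) :
    WalkTo G X w := by
  obtain ⟨m, f, hm, h0, hv, hstep, hnotX, hund⟩ := h
  refine ⟨m + 1, fun i => if i ≤ m then f i else w, le_trans hm (Nat.le_succ m),
    ?_, ?_, ?_, ?_, ?_⟩
  · simpa using h0
  · simp
  · intro i hi
    rcases lt_or_ge i m with hlt | hge
    · simp only [hlt.le, if_pos, Nat.succ_le_of_lt hlt]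
      simpa [hlt.le, Nat.succ_le_of_lt hlt] using hstep i hlt
    · have : i = m := le_antisymm (Nat.lt_succ_iff.mp hi) hge
      subst this
      simpa [hv] using hs
  · intro i h1 h2
    by_cases hle : i ≤ m
    · simpa [hle] using hnotX i h1 hle
    · simpa [hle] using hw
  · have h1 : (1 : ℕ) ≤ m := hm
    simpa [Nat.zero_le, h1] using hund

lemma walkTo_of_chain {x a : V} (hx : x ∈ X)
    (h : Relation.ReflTransGen G.undir x a) (ha : a ∉ X) : WalkTo G X a := by
  induction h with
  | refl => exact absurd hx ha
  | tail hxb hba ih =>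
    rename_i b c
    by_cases hb : b ∈ X
    · refine ⟨1, fun i => if i = 0 then b else c, le_refl 1, by simpa using hb,
        by simp, ?_, ?_, by simpa using hba⟩
      · intro i hi
        interval_cases i
        simpa [PDG.SStep] using Or.inr hba
      · intro i h1 h2
        interval_cases i
        simpa using ha
    · exact (ih hb).step G X (Or.inr hba) ha

lemma WalkTo.dirExtend {a y : V}
    (h : WalkTo G X a)
    (hd : Relation.ReflTransGen (fun p q => G.dir p q ∧ p ∈ Xᶜ ∧ q ∈ Xᶜ) a y) :
    WalkTo G X y := by
  induction hd with
  | refl => exact h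
  | tail _ hbc ih => exact ih.step G X (Or.inl hbc.1) hbc.2.2

lemma walkTo_path (Y : Set V) : ∀ m, ∀ f : ℕ → V, 1 ≤ m → f 0 ∈ X → f m ∈ Y →
    (∀ i < m, G.SStep (f i) (f (i + 1))) → (∀ i, 1 ≤ i → i ≤ m → f i ∉ X) →
    G.undir (f 0) (f 1) → G.HasProperUndirStartPath X Y := by
  intro m
  induction m using Nat.strong_induction_on with
  | _ m ih =>
  intro f hm h0 hy hstep hnotX hund
  by_cases hinj : ∀ i ≤ m, ∀ j ≤ m, f i = f j → i = j
  · exact ⟨m, f, hm, hinj, h0, hy, hstep, hnotX, hund⟩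
  · push_neg at hinj
    obtain ⟨i, hi, j, hj, hfij, hij⟩ := hinj
    -- wlog i < j
    obtain ⟨i, j, hi, hj, hfij, hlt⟩ : ∃ i j, i ≤ m ∧ j ≤ m ∧ f i = f j ∧ i < j := by
      rcases lt_or_gt_of_ne hij with h' | h'
      · exact ⟨i, j, hi, hj, hfij, h'⟩
      · exact ⟨j, i, hj, hi, hfij.symm, h'⟩
    have hi1 : 1 ≤ i := by
      by_contra h'
      have : i = 0 := by omega
      subst this
      exact hnotX j (by omega) hj (hfij ▸ h0)
    set g : ℕ → V := fun k => if k ≤ i then f k else f (k + (j - i)) with hg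
    have hgdef : ∀ k, g k = if k ≤ i then f k else f (k + (j - i)) := fun _ => rfl
    have hm' : 1 ≤ m - (j - i) := by omega
    have hgm : g (m - (j - i)) = f m := by
      rcases eq_or_lt_of_le hj with hjm | hjm
      · have h1 : m - (j - i) = i := by omega
        rw [hgdef, h1, if_pos (le_refl i), hfij, hjm]
      · have hc : ¬ (m - (j - i) ≤ i) := by omega
        rw [hgdef, if_neg hc]
        congr 1
        omega
    refine ih (m - (j - i)) (by omega) g hm' ?_ (hgm ▸ hy) ?_ ?_ ?_
    · rw [hgdef, if_pos (Nat.zero_le i)]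
      exact h0
    · intro k hk
      rcases lt_or_ge k i with hki | hki
      · rw [hgdef, hgdef, if_pos hki.le, if_pos (show k + 1 ≤ i from hki)]
        exact hstep k (by omega)
      · have h1 : ¬ (k + 1 ≤ i) := by omega
        rcases eq_or_lt_of_le hki with he | hlt'
        · have e1 : g k = f j := by
            rw [hgdef, if_pos (le_of_eq he.symm), ← he, hfij]
          have e2 : g (k + 1) = f (j + 1) := by
            have e : k + 1 + (j - i) = j + 1 := by omega
            rw [hgdef, if_neg h1, e]
          rw [e1, e2]
          exact hstep j (by omega)
        · have h2 : ¬ (k ≤ i) := by omega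
          have h3 := hstep (k + (j - i)) (by omega)
          have e : k + (j - i) + 1 = k + 1 + (j - i) := by omega
          rw [e] at h3
          rw [hgdef, hgdef, if_neg h2, if_neg h1]
          exact h3
    · intro k h1 h2
      by_cases hc : k ≤ i
      · rw [hgdef, if_pos hc]
        exact hnotX k h1 (by omega)
      · rw [hgdef, if_neg hc]
        exact hnotX (k + (j - i)) (by omega) (by omega)
    · rw [hgdef, hgdef, if_pos (Nat.zero_le i), if_pos hi1]
      exact hund

end Aux

/-- If `G` is strictly acyclic with `I→J, J—K ⇒ I, K` adjacent and there is
no proper semi-directed path from `X` to `Y` starting with an undirected edge, then no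
chain component of `G` intersects both `X` and `An_{G_{V∖X}}(Y)`. -/
theorem stmt7 {V : Type} [Fintype V] (G : PDG V)
    (hSA : G.StrictlyAcyclic)
    (hMeek : ∀ I J K : V, G.dir I J → G.undir J K → G.Adj I K)
    (X Y : Set V) (hXY : Disjoint X Y)
    (hpath : ¬ G.HasProperUndirStartPath X Y) :
    ∀ i : V, ¬ ((G.chainComp i ∩ X).Nonempty ∧
      (G.chainComp i ∩ (G.induce Xᶜ).An Y).Nonempty) := by
  rintro i ⟨⟨x, hxc, hxX⟩, ⟨a, hac, haAn⟩⟩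
  obtain ⟨d, hdY, hda⟩ := haAn
  have haX : a ∉ X := by
    rcases Relation.reflTransGen_iff_eq_or_transGen.mp hda with h | h
    · exact fun h' => hXY.ne_of_mem h' hdY h.symm
    · obtain ⟨b, hb, -⟩ := Relation.TransGen.head'_iff.mp h
      exact hb.2.1
  have hxa : Relation.ReflTransGen G.undir x a := by
    have hsymm : ∀ p q : V, G.undir p q → G.undir q p := G.undir_symm
    have h1 : Relation.ReflTransGen G.undir x i := by
      have := hxc
      have key : ∀ u v, Relation.ReflTransGen G.undir u v → Relation.ReflTransGen G.undir v u := by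
        intro u v h
        induction h with
        | refl => exact Relation.ReflTransGen.refl
        | tail _ hbc ih => exact Relation.ReflTransGen.head (hsymm _ _ hbc) ih
      exact key _ _ this
    exact h1.trans hac
  have hwalk : WalkTo G X a := walkTo_of_chain G X hxX hxa haX
  have hwalk' : WalkTo G X d := hwalk.dirExtend G X hda
  obtain ⟨m, f, hm, h0, hv, hstep, hnotX, hund⟩ := hwalk'
  exact hpath (walkTo_path G X Y m f hm h0 (hv ▸ hdY) hstep hnotX hund)
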